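/- Let 𝒴 = {a, b, c} and define probability vectors W₀, W₁ on 𝒴 by W₀(a) = W₀(b) = 1/2, W₀(c) = 0, and W₁(b) = W₁(c) = 1/2, W₁(a) = 0. For n ≥ 1 let P_n := T_{n,0} be the law of the histogram of n i.i.d. draws from W₀, and let Q_n := T_{n,1} be the law of the histogram of n−1 i.i.d. draws from W₀ plus one independent draw from W₁. Then for every n ≥ 1 and every ε ≥ 0, δ_{Q_n‖P_n}(ε) ≥ 1/2. (Indeed, the event {histogram has N(c) > 0} has probability 1/2 under Q_n and probability 0 under P_n.) -/

import Mathlib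

open MeasureTheory

/-- The privacy curve of the binary experiment `(P,Q)`:
`δ_{Q‖P}(ε) = sup_{A measurable} (Q(A) − e^ε P(A))`. -/
noncomputable def privCurve {X : Type*} [MeasurableSpace X] (P Q : Measure X) (ε : ℝ) : ℝ :=
  ⨆ A : {A : Set X // MeasurableSet A}, ((Q A.1).toReal - Real.exp ε * (P A.1).toReal)

/-- The discrete measure on a finite type with weight vector `w`. -/
noncomputable def discMeasure {D : Type*} [Fintype D] [MeasurableSpace D] (w : D → ℝ) :
    Measure D :=
  ∑ y, (ENNReal.ofReal (w y)) • Measure.dirac y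

/-- The alphabet `𝒴 = {a,b,c}`, encoded as `Fin 3` with `a = 0`, `b = 1`, `c = 2`. -/
abbrev Alphabet : Type := Fin 3

/-- `W₀(a) = W₀(b) = 1/2`, `W₀(c) = 0`. -/
noncomputable def W₀ : Alphabet → ℝ := ![1/2, 1/2, 0]

/-- `W₁(a) = 0`, `W₁(b) = W₁(c) = 1/2`. -/
noncomputable def W₁ : Alphabet → ℝ := ![0, 1/2, 1/2]

/-- `P_n = T_{n,0}`: the law on `ℕ^𝒴` of the histogram of `n` i.i.d. draws from `W₀`. -/
noncomputable def Pmeas (n : ℕ) : Measure (Alphabet → ℕ) :=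
  Measure.map (fun ω : Fin n → Alphabet => ∑ i, Pi.single (ω i) 1)
    (Measure.pi fun _ : Fin n => discMeasure W₀)

/-- `Q_n = T_{n,1}`: the law on `ℕ^𝒴` of the histogram of `n−1` i.i.d. draws from
`W₀` together with one independent draw from `W₁`. -/
noncomputable def Qmeas (n : ℕ) : Measure (Alphabet → ℕ) :=
  Measure.map
    (fun ω : (Fin (n - 1) → Alphabet) × Alphabet =>
      (∑ i, Pi.single (ω.1 i) 1) + Pi.single ω.2 1)
    ((Measure.pi fun _ : Fin (n - 1) => discMeasure W₀).prod (discMeasure W₁))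

lemma W0_univ : discMeasure W₀ Set.univ = 1 := by
  simp [discMeasure, Measure.finset_sum_apply, Fin.sum_univ_three, W₀]
  exact ENNReal.inv_two_add_inv_two

lemma W1_univ : discMeasure W₁ Set.univ = 1 := by
  simp [discMeasure, Measure.finset_sum_apply, Fin.sum_univ_three, W₁]
  exact ENNReal.inv_two_add_inv_two

lemma W0_two : discMeasure W₀ {2} = 0 := by
  simp [discMeasure, Measure.finset_sum_apply, Fin.sum_univ_three, W₀, Measure.dirac_apply]

lemma W1_two : discMeasure W₁ {2} = 1/2 := by
  simp [discMeasure, Measure.finset_sum_apply, Fin.sum_univ_three, W₁, Measure.dirac_apply]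

instance : IsProbabilityMeasure (discMeasure W₀) := ⟨W0_univ⟩
instance : IsProbabilityMeasure (discMeasure W₁) := ⟨W1_univ⟩

lemma pi_bad (m : ℕ) :
    (Measure.pi fun _ : Fin m => discMeasure W₀) {ω | ∃ i, ω i = 2} = 0 := by
  have h : {ω : Fin m → Alphabet | ∃ i, ω i = 2} = ⋃ i, Function.eval i ⁻¹' {2} := by
    ext ω; simp [Function.eval]
  rw [h]
  exact measure_iUnion_null fun i => Measure.pi_eval_preimage_null _ W0_two


lemma hA_meas : MeasurableSet {h : Alphabet → ℕ | 0 < h 2} :=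
  measurable_pi_apply (2 : Alphabet) (show MeasurableSet {k : ℕ | 0 < k} from .of_discrete)

lemma P_event (n : ℕ) : Pmeas n {h | 0 < h 2} = 0 := by
  rw [Pmeas, Measure.map_apply (measurable_of_countable _) hA_meas]
  refine measure_mono_null ?_ (pi_bad n)
  intro ω hω
  simp only [Set.mem_preimage, Set.mem_setOf_eq, Finset.sum_apply] at hω
  obtain ⟨i, _, hi⟩ := Finset.exists_ne_zero_of_sum_ne_zero hω.ne'
  refine ⟨i, ?_⟩
  by_contra h
  exact hi (by simp [Pi.single_apply, Ne.symm h])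

lemma Q_event (n : ℕ) : Qmeas n {h | 0 < h 2} = 1/2 := by
  rw [Qmeas, Measure.map_apply (measurable_of_countable _) hA_meas]
  set μ := (Measure.pi fun _ : Fin (n - 1) => discMeasure W₀).prod (discMeasure W₁) with hμ
  have hB : μ {ω : (Fin (n - 1) → Alphabet) × Alphabet | ∃ i, ω.1 i = 2} = 0 := by
    have h : {ω : (Fin (n - 1) → Alphabet) × Alphabet | ∃ i, ω.1 i = 2}
        = {ω : Fin (n-1) → Alphabet | ∃ i, ω i = 2} ×ˢ Set.univ := by
      ext ⟨x, y⟩; simp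
    rw [h, Measure.prod_prod, pi_bad (n-1), zero_mul]
  have hS : μ {ω : (Fin (n - 1) → Alphabet) × Alphabet | ω.2 = 2} = 1/2 := by
    have h : {ω : (Fin (n - 1) → Alphabet) × Alphabet | ω.2 = 2}
        = Set.univ ×ˢ ({2} : Set Alphabet) := by
      ext ⟨x, y⟩; simp [eq_comm]
    rw [h, Measure.prod_prod, measure_univ, one_mul, W1_two]
  have hae : ((fun ω : (Fin (n - 1) → Alphabet) × Alphabet =>
      (∑ i, Pi.single (ω.1 i) 1) + Pi.single ω.2 1) ⁻¹' {h : Alphabet → ℕ | 0 < h 2})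
      =ᵐ[μ] {ω : (Fin (n - 1) → Alphabet) × Alphabet | ω.2 = 2} := by
    rw [MeasureTheory.ae_eq_set]
    constructor
    · refine measure_mono_null ?_ hB
      rintro ⟨ω, y⟩ ⟨h1, h2⟩
      simp only [Set.mem_setOf_eq] at h2
      simp only [Set.mem_preimage, Set.mem_setOf_eq, Pi.add_apply,
        Finset.sum_apply] at h1
      rw [Pi.single_apply, if_neg (Ne.symm h2), add_zero] at h1
      obtain ⟨i, _, hi⟩ := Finset.exists_ne_zero_of_sum_ne_zero h1.ne'
      refine ⟨i, ?_⟩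
      by_contra h
      exact hi (by simp [Pi.single_apply, Ne.symm h])
    · refine measure_mono_null ?_ hB
      rintro ⟨ω, y⟩ ⟨h1, h2⟩
      exfalso
      apply h2
      simp only [Set.mem_setOf_eq] at h1
      simp only [Set.mem_preimage, Set.mem_setOf_eq, Pi.add_apply, Finset.sum_apply]
      rw [Pi.single_apply, if_pos h1.symm]
      omega
  exact (measure_congr hae).trans hS

lemma Q_prob (n : ℕ) : IsProbabilityMeasure (Qmeas n) := by
  rw [Qmeas]
  exact Measure.isProbabilityMeasure_map (measurable_of_countable _).aemeasurable


/-- Strong-boundary obstruction (Proposition 6.1, explicit example): for the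
overlapping two-dominant array `W₀ = (1/2,1/2,0)`, `W₁ = (0,1/2,1/2)` with `k_n ≡ 0`,
the event `{N(c) > 0}` has probability `1/2` under `Q_n` and `0` under `P_n`, so
`δ_{Q_n‖P_n}(ε) ≥ 1/2` for every `n ≥ 1` and every `ε ≥ 0`. -/
theorem strong_boundary_obstruction (n : ℕ) (hn : 1 ≤ n) (ε : ℝ) (hε : 0 ≤ ε) :
    Qmeas n {h | 0 < h 2} = 1 / 2 ∧
    Pmeas n {h | 0 < h 2} = 0 ∧
    1 / 2 ≤ privCurve (Pmeas n) (Qmeas n) ε := by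
  refine ⟨Q_event n, P_event n, ?_⟩
  haveI := Q_prob n
  have hbdd : BddAbove (Set.range fun A : {A : Set (Alphabet → ℕ) // MeasurableSet A} =>
      ((Qmeas n A.1).toReal - Real.exp ε * (Pmeas n A.1).toReal)) := by
    refine ⟨1, ?_⟩
    rintro x ⟨A, rfl⟩
    dsimp only
    have h1 : (Qmeas n A.1).toReal ≤ 1 := by
      have := prob_le_one (μ := Qmeas n) (s := A.1)
      simpa using ENNReal.toReal_mono ENNReal.one_ne_top this
    have h2 : 0 ≤ Real.exp ε * (Pmeas n A.1).toReal :=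
      mul_nonneg (Real.exp_pos ε).le ENNReal.toReal_nonneg
    linarith
  have hle := le_ciSup hbdd (⟨{h | 0 < h 2}, hA_meas⟩ :
    {A : Set (Alphabet → ℕ) // MeasurableSet A})
  rw [privCurve]
  refine le_trans ?_ hle
  rw [Q_event n, P_event n]
  norm_num
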